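/- Let S ⊂ Z_{>0} be a nonempty finite set with m = max(S), let n ≥ m+1 be an integer, and let π ∈ A(S; m+1) with π(m+1) = k. Then Σ q^{ℓ(w)}, summed over all w ∈ A(S;n) such that the standardization of (w(1), ..., w(m+1)) equals π, is equal to q^{ℓ(π)} · [n−k choose m−k+1]_q. -/

import Mathlib

open Polynomial Finset

noncomputable section

/-- The number of inversions (the Coxeter length) of a permutation of `Fin n`. -/
def invNum {n : ℕ} (π : Equiv.Perm (Fin n)) : ℕ :=
  (Finset.univ.filter fun p : Fin n × Fin n => p.1 < p.2 ∧ π p.2 < π p.1).card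

/-- The descent set of a permutation, as a set of positive integers (1-indexed positions):
`i ∈ Des(π)` iff `1 ≤ i ≤ n-1` and `π_i > π_{i+1}` in one-line notation. -/
def DesSet {n : ℕ} (π : Equiv.Perm (Fin n)) : Finset ℕ :=
  (Finset.univ.filter fun a : Fin n => ∃ b : Fin n, (a : ℕ) + 1 = (b : ℕ) ∧ π b < π a).image
    fun a : Fin n => (a : ℕ) + 1

/-- The peak set of a permutation (1-indexed positions):
`i ∈ Peak(π)` iff `2 ≤ i ≤ n-1` and `π_{i-1} < π_i > π_{i+1}` in one-line notation. -/
def PeakSet {n : ℕ} (π : Equiv.Perm (Fin n)) : Finset ℕ :=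
  (Finset.univ.filter fun b : Fin n =>
      ∃ a c : Fin n, (a : ℕ) + 1 = (b : ℕ) ∧ (b : ℕ) + 1 = (c : ℕ) ∧ π a < π b ∧ π c < π b).image
    fun b : Fin n => (b : ℕ) + 1

/-- The q-integer `[j]_q = 1 + q + ⋯ + q^(j-1)`. -/
def qNum (j : ℕ) : Polynomial ℝ := ∑ i ∈ Finset.range j, X ^ i

/-- The q-factorial `[n]!_q = [1]_q [2]_q ⋯ [n]_q`. -/
def qFactorial : ℕ → Polynomial ℝ
  | 0 => 1
  | n + 1 => qFactorial n * qNum (n + 1)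

/-- The q-binomial coefficient `[n choose k]_q = [n]!_q / ([k]!_q [n-k]!_q)`.
(The divisor is monic and the division is exact, so `divByMonic` gives the true quotient.) -/
def qBinom (n k : ℕ) : Polynomial ℝ :=
  qFactorial n /ₘ (qFactorial k * qFactorial (n - k))

/-- `(−q;q)_k = (1+q)(1+q²)⋯(1+q^k)`. -/
def qPoch (k : ℕ) : Polynomial ℝ := ∏ i ∈ Finset.range k, (1 + X ^ (i + 1))

/-- `D_S(n,q) = Σ_{π ∈ 𝔖_n, Des(π) = S} q^{ℓ(π)}`. -/
def Dpoly (S : Finset ℕ) (n : ℕ) : Polynomial ℝ :=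
  ∑ π ∈ Finset.univ.filter (fun π : Equiv.Perm (Fin n) => DesSet π = S), X ^ invNum π

/-- `P_S(n,q) = Σ_{π ∈ 𝔖_n, Peak(π) = S} q^{ℓ(π)}`. -/
def Ppoly (S : Finset ℕ) (n : ℕ) : Polynomial ℝ :=
  ∑ π ∈ Finset.univ.filter (fun π : Equiv.Perm (Fin n) => PeakSet π = S), X ^ invNum π

/-- `Q_S(n,q) = Σ_{π ∈ 𝔖_n, Peak(π) ⊇ S} q^{ℓ(π)}`. -/
def Qpoly (S : Finset ℕ) (n : ℕ) : Polynomial ℝ :=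
  ∑ π ∈ Finset.univ.filter (fun π : Equiv.Perm (Fin n) => S ⊆ PeakSet π), X ^ invNum π

/-- The sequence `(a i)` for `lo ≤ i ≤ hi` is strongly q-log concave: it has no internal
zeroes and `a i * a j - a (i-1) * a (j+1)` has nonnegative coefficients for `lo < i ≤ j < hi`. -/
def StronglyQLogConcave (lo hi : ℕ) (a : ℕ → Polynomial ℝ) : Prop :=
  (∀ i j l : ℕ, lo ≤ i → i < j → j < l → l ≤ hi → a i ≠ 0 → a l ≠ 0 → a j ≠ 0) ∧
  ∀ i j : ℕ, lo < i → i ≤ j → j < hi → ∀ m : ℕ,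
    0 ≤ (a i * a j - a (i - 1) * a (j + 1)).coeff m



section Aux


/-- Gaussian binomial by recursion. -/
def gb : ℕ → ℕ → Polynomial ℝ
  | 0, 0 => 1
  | 0, _ + 1 => 0
  | _ + 1, 0 => 1
  | N + 1, r + 1 => X ^ (N - r) * gb N r + gb N (r + 1)

lemma gb_eq_zero : ∀ N r : ℕ, N < r → gb N r = 0
  | 0, r + 1, _ => rfl
  | N + 1, r + 1, h => by
    rw [gb, gb_eq_zero N r (by omega), gb_eq_zero N (r+1) (by omega)]
    ring

lemma qNum_add (a b : ℕ) : qNum (a + b) = qNum a + X ^ a * qNum b := by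
  unfold qNum
  rw [Finset.sum_range_add, Finset.mul_sum]
  congr 1
  exact Finset.sum_congr rfl fun i _ => (pow_add X a i)

lemma qNum_monic (j : ℕ) : (qNum (j + 1)).Monic := by
  simpa [qNum] using Polynomial.monic_geom_sum_X (R := ℝ) (n := j + 1) (by omega)

lemma qFactorial_monic (n : ℕ) : (qFactorial n).Monic := by
  induction n with
  | zero => exact monic_one
  | succ n ih => exact ih.mul (qNum_monic n)

lemma gb_mul : ∀ N r : ℕ, r ≤ N →
    gb N r * (qFactorial r * qFactorial (N - r)) = qFactorial N := by
  intro N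
  induction N with
  | zero => intro r hr; interval_cases r; simp [gb, qFactorial]
  | succ N ih =>
    intro r hr
    match r with
    | 0 => simp [gb, qFactorial]
    | r + 1 =>
      rcases eq_or_lt_of_le hr with h | h
      · -- r + 1 = N + 1, i.e. r = N
        have hrN : r = N := by omega
        subst hrN
        rw [gb, gb_eq_zero r (r+1) (by omega)]
        have := ih r le_rfl
        simp only [Nat.sub_self, qFactorial] at this ⊢
        linear_combination qNum (r + 1) * this
      · have hrN : r + 1 ≤ N := by omega
        rw [gb]
        have h1 := ih r (by omega)
        have h2 := ih (r+1) hrN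
        have e1 : qFactorial (r + 1) = qFactorial r * qNum (r + 1) := rfl
        have e2 : N + 1 - (r + 1) = N - r := by omega
        have e3 : qFactorial (N - r) = qFactorial (N - (r + 1)) * qNum (N - r) := by
          rw [show N - r = (N - (r+1)) + 1 by omega]; rfl
        have e4 : qNum (N + 1) = qNum (N - r) + X ^ (N - r) * qNum (r + 1) := by
          rw [← qNum_add]; congr 1; omega
        calc (X ^ (N - r) * gb N r + gb N (r + 1)) *
              (qFactorial (r + 1) * qFactorial (N + 1 - (r + 1)))
            = X ^ (N - r) * qNum (r+1) * (gb N r * (qFactorial r * qFactorial (N - r)))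
              + qNum (N - r) * (gb N (r+1) * (qFactorial (r+1) * qFactorial (N - (r+1)))) := by
              rw [e1, e2, e3]; ring
          _ = X ^ (N - r) * qNum (r+1) * qFactorial N + qNum (N - r) * qFactorial N := by
              rw [h1, h2]
          _ = qFactorial N * qNum (N + 1) := by rw [e4]; ring
          _ = qFactorial (N + 1) := rfl

lemma qBinom_eq_gb (N r : ℕ) (h : r ≤ N) : qBinom N r = gb N r := by
  have hm : (qFactorial r * qFactorial (N - r)).Monic :=
    (qFactorial_monic r).mul (qFactorial_monic (N - r))
  rw [qBinom, ← gb_mul N r h, Polynomial.divByMonic_eq_div _ hm,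
    mul_div_cancel_right₀ _ hm.ne_zero]


def nus {α : Type*} [DecidableEq α] [LinearOrder α] (s A : Finset α) : ℕ :=
  ∑ a ∈ A, ((s.filter (· < a)).filter (· ∉ A)).card

def Gp {α : Type*} [DecidableEq α] [LinearOrder α] (s : Finset α) (r : ℕ) : Polynomial ℝ :=
  ∑ A ∈ s.powersetCard r, X ^ nus s A

variable {α : Type*} [DecidableEq α] [LinearOrder α]

lemma nus_subset_insert {t A : Finset α} {a : α} (hlt : ∀ x ∈ t, x < a) (hA : A ⊆ t) :
    nus (insert a t) A = nus t A := by
  unfold nus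
  refine Finset.sum_congr rfl fun x hx => ?_
  congr 2
  rw [Finset.filter_insert, if_neg (by exact fun h => absurd (hlt x (hA hx)) (asymm h))]

lemma nus_insert {t A : Finset α} {a : α} (hat : a ∉ t) (hlt : ∀ x ∈ t, x < a) (hA : A ⊆ t) :
    nus (insert a t) (insert a A) = nus t A + (t.card - A.card) := by
  have haA : a ∉ A := fun h => hat (hA h)
  unfold nus
  rw [Finset.sum_insert haA]
  have h1 : (insert a t).filter (· < a) = t := by
    rw [Finset.filter_insert, if_neg (lt_irrefl a)]
    exact Finset.filter_true_of_mem hlt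
  have h2 : t.filter (fun x => x ∉ insert a A) = t \ A := by
    ext x
    simp only [Finset.mem_filter, Finset.mem_insert, Finset.mem_sdiff, not_or]
    constructor
    · rintro ⟨hx, _, hxA⟩; exact ⟨hx, hxA⟩
    · rintro ⟨hx, hxA⟩; exact ⟨hx, fun he => hat (he ▸ hx), hxA⟩
  rw [h1, h2, Finset.card_sdiff_of_subset hA]
  have h3 : ∀ x ∈ A, ((insert a t).filter (· < x)).filter (fun y => y ∉ insert a A) =
      (t.filter (· < x)).filter (fun y => y ∉ A) := by
    intro x hx
    rw [Finset.filter_insert, if_neg (by exact fun h => absurd (hlt x (hA hx)) (asymm h))]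
    ext y
    simp only [Finset.mem_filter, Finset.mem_insert, not_or]
    constructor
    · rintro ⟨⟨hy, hyx⟩, _, hyA⟩; exact ⟨⟨hy, hyx⟩, hyA⟩
    · rintro ⟨⟨hy, hyx⟩, hyA⟩; exact ⟨⟨hy, hyx⟩, fun he => hat (he ▸ hy), hyA⟩
  rw [Finset.sum_congr rfl (fun x hx => by rw [h3 x hx])]
  omega

lemma Gp_insert {t : Finset α} {a : α} (hat : a ∉ t) (hlt : ∀ x ∈ t, x < a) (r : ℕ) :
    Gp (insert a t) (r + 1) = X ^ (t.card - r) * Gp t r + Gp t (r + 1) := by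
  unfold Gp
  rw [Finset.powersetCard_succ_insert hat]
  rw [Finset.sum_union (by
    rw [Finset.disjoint_left]
    intro A hA hA2
    rw [Finset.mem_powersetCard] at hA
    rw [Finset.mem_image] at hA2
    obtain ⟨B, hB, rfl⟩ := hA2
    exact absurd (hA.1 (Finset.mem_insert_self a B)) hat)]
  rw [Finset.sum_image (by
    intro A hA B hB hAB
    rw [Finset.mem_coe, Finset.mem_powersetCard] at hA hB
    have haA : a ∉ A := fun h => hat (hA.1 h)
    have haB : a ∉ B := fun h => hat (hB.1 h)
    rw [← Finset.erase_insert haA, hAB, Finset.erase_insert haB])]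
  rw [add_comm]
  congr 1
  · rw [Finset.mul_sum]
    refine Finset.sum_congr rfl fun A hA => ?_
    rw [Finset.mem_powersetCard] at hA
    rw [nus_insert hat hlt hA.1, hA.2, pow_add, mul_comm]
  · refine Finset.sum_congr rfl fun A hA => ?_
    rw [Finset.mem_powersetCard] at hA
    rw [nus_subset_insert hlt hA.1]

lemma Gp_zero (s : Finset α) : Gp s 0 = 1 := by
  simp [Gp, Finset.powersetCard_zero, nus]

lemma Gp_eq_gb : ∀ (N : ℕ) (s : Finset α), s.card = N → ∀ r, Gp s r = gb N r := by
  intro N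
  induction N with
  | zero =>
    intro s hs r
    rw [Finset.card_eq_zero] at hs
    subst hs
    match r with
    | 0 => simp [Gp, nus, gb]
    | r + 1 =>
      rw [Gp, show gb 0 (r+1) = 0 from rfl,
        Finset.powersetCard_eq_empty.mpr (by simp), Finset.sum_empty]
  | succ N ih =>
    intro s hs r
    have hne : s.Nonempty := Finset.card_pos.mp (by omega)
    have hmem : s.max' hne ∈ s := s.max'_mem hne
    have hins : s = insert (s.max' hne) (s.erase (s.max' hne)) :=
      (Finset.insert_erase hmem).symm
    have hat : s.max' hne ∉ s.erase (s.max' hne) := Finset.notMem_erase _ _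
    have htc : (s.erase (s.max' hne)).card = N := by
      rw [Finset.card_erase_of_mem hmem, hs]
      omega
    have hlt : ∀ x ∈ s.erase (s.max' hne), x < s.max' hne := fun x hx =>
      lt_of_le_of_ne (s.le_max' x (Finset.mem_of_mem_erase hx)) (Finset.ne_of_mem_erase hx)
    match r with
    | 0 => rw [Gp_zero]; rfl
    | r + 1 =>
      rw [hins, Gp_insert hat hlt r, htc, ih _ htc r, ih _ htc (r + 1)]
      rfl


variable {n m : ℕ}

/-- head set: image of first m+1 positions -/
def hdSet (hn : m + 1 ≤ n) (w : Equiv.Perm (Fin n)) : Finset (Fin n) :=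
  Finset.univ.image (fun i : Fin (m + 1) => w (Fin.castLE hn i))

lemma hdSet_card (hn : m + 1 ≤ n) (w : Equiv.Perm (Fin n)) : (hdSet hn w).card = m + 1 := by
  rw [hdSet, Finset.card_image_of_injective _ (fun i j h => Fin.castLE_injective hn (w.injective h)),
    card_univ, Fintype.card_fin]

lemma mem_hdSet_iff (hn : m + 1 ≤ n) (w : Equiv.Perm (Fin n)) (x : Fin n) :
    x ∈ hdSet hn w ↔ ((w.symm x : Fin n) : ℕ) < m + 1 := by
  simp only [hdSet, mem_image, mem_univ, true_and]
  constructor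
  · rintro ⟨i, rfl⟩; simp [Fin.castLE]; have := i.isLt; omega
  · intro h; exact ⟨⟨(w.symm x : Fin n), h⟩, by
      have heq : Fin.castLE hn ⟨((w.symm x : Fin n) : ℕ), h⟩ = w.symm x := by
        apply Fin.ext; rfl
      rw [heq]; simp⟩

/-- order-embedding lower bound -/
lemma ordemb_ge {c : ℕ} (s : Finset (Fin n)) (hs : s.card = c) :
    ∀ jv : ℕ, ∀ hj : jv < c, jv ≤ ((s.orderEmbOfFin hs ⟨jv, hj⟩ : Fin n) : ℕ) := by
  intro jv
  induction jv with
  | zero => exact fun _ => Nat.zero_le _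
  | succ v ih =>
    intro hj
    have h1 : v < c := by omega
    have h2 : s.orderEmbOfFin hs ⟨v, h1⟩ < s.orderEmbOfFin hs ⟨v+1, hj⟩ :=
      (s.orderEmbOfFin hs).strictMono (by simp [Fin.lt_def])
    have h3 := (Fin.lt_def).mp h2
    have := ih h1
    omega

/-- if all values below k belong to T, the j-th smallest element of T is j for j < k -/
lemma ordemb_low {c k : ℕ} (T : Finset (Fin n)) (hT : T.card = c)
    (hlow : ∀ i : Fin n, (i : ℕ) < k → i ∈ T) :
    ∀ jv : ℕ, ∀ hj : jv < c, jv < k → ((T.orderEmbOfFin hT ⟨jv, hj⟩ : Fin n) : ℕ) = jv := by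
  intro jv
  induction jv using Nat.strong_induction_on with
  | _ jv IH =>
    intro hj hjk
    have hge := ordemb_ge T hT jv hj
    have hjn : jv < n := by
      have := (T.orderEmbOfFin hT ⟨jv, hj⟩ : Fin n).isLt; omega
    have hmem : (⟨jv, hjn⟩ : Fin n) ∈ T := hlow _ hjk
    have hrange : ∃ i : Fin c, T.orderEmbOfFin hT i = ⟨jv, hjn⟩ := by
      have h0 := T.range_orderEmbOfFin hT
      have h1 : (⟨jv, hjn⟩ : Fin n) ∈ Set.range (T.orderEmbOfFin hT) := by
        rw [h0]; exact_mod_cast hmem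
      exact h1
    obtain ⟨⟨iv, hi⟩, hieq⟩ := hrange
    have hvals : ((T.orderEmbOfFin hT ⟨iv, hi⟩ : Fin n) : ℕ) = jv := by rw [hieq]
    have hile : jv ≤ iv := by
      by_contra hlt
      push_neg at hlt
      have := IH iv hlt hi (by omega)
      omega
    have hmono : T.orderEmbOfFin hT ⟨jv, hj⟩ ≤ T.orderEmbOfFin hT ⟨iv, hi⟩ :=
      (T.orderEmbOfFin hT).monotone (by simp [Fin.le_def]; omega)
    have := (Fin.le_def).mp hmono
    omega

lemma compl_card (T : Finset (Fin n)) (hT : T.card = m + 1) : Tᶜ.card = n - (m + 1) := by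
  rw [Finset.card_compl, hT, Fintype.card_fin]

variable (hn : m + 1 ≤ n) (π : Equiv.Perm (Fin (m + 1)))

/-- the permutation built from a head value set `T` -/
def buildFun (T : Finset (Fin n)) (hT : T.card = m + 1) : Fin n → Fin n := fun i =>
  if h : (i : ℕ) < m + 1 then (T.orderEmbOfFin hT (π ⟨(i : ℕ), h⟩) : Fin n)
  else (Tᶜ.orderEmbOfFin (compl_card T hT) ⟨(i : ℕ) - (m + 1), by
    have := i.isLt; omega⟩ : Fin n)

lemma buildFun_inj (T : Finset (Fin n)) (hT : T.card = m + 1) :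
    Function.Injective (buildFun hn π T hT) := by
  intro i j hij
  unfold buildFun at hij
  by_cases hi : (i : ℕ) < m + 1 <;> by_cases hj : (j : ℕ) < m + 1
  · rw [dif_pos hi, dif_pos hj] at hij
    have h1 := (T.orderEmbOfFin hT).injective hij
    have h2 := π.injective h1
    have := congrArg Fin.val h2
    exact Fin.ext this
  · rw [dif_pos hi, dif_neg hj] at hij
    have h1 := T.orderEmbOfFin_mem hT (π ⟨(i : ℕ), hi⟩)
    have h2 := Tᶜ.orderEmbOfFin_mem (compl_card T hT) ⟨(j : ℕ) - (m + 1), by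
      have := j.isLt; omega⟩
    rw [hij] at h1
    rw [Finset.mem_compl] at h2
    exact absurd h1 h2
  · rw [dif_neg hi, dif_pos hj] at hij
    have h1 := T.orderEmbOfFin_mem hT (π ⟨(j : ℕ), hj⟩)
    have h2 := Tᶜ.orderEmbOfFin_mem (compl_card T hT) ⟨(i : ℕ) - (m + 1), by
      have := i.isLt; omega⟩
    rw [← hij] at h1
    rw [Finset.mem_compl] at h2
    exact absurd h1 h2
  · rw [dif_neg hi, dif_neg hj] at hij
    have h1 := (Tᶜ.orderEmbOfFin (compl_card T hT)).injective hij
    have h2 := congrArg Fin.val h1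
    simp only [Fin.val_mk] at h2
    exact Fin.ext (by omega)

def wbuild (T : Finset (Fin n)) : Equiv.Perm (Fin n) :=
  if hT : T.card = m + 1 then
    Equiv.ofBijective _ ((Finite.injective_iff_bijective).mp (buildFun_inj hn π T hT))
  else 1

lemma wbuild_apply (T : Finset (Fin n)) (hT : T.card = m + 1) (i : Fin n) :
    wbuild hn π T i = buildFun hn π T hT i := by
  rw [wbuild, dif_pos hT]; rfl

def Compat (w : Equiv.Perm (Fin n)) : Prop :=
  ∀ i j : Fin (m + 1), (π i < π j ↔ w (Fin.castLE hn i) < w (Fin.castLE hn j))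

def NoTail (w : Equiv.Perm (Fin n)) : Prop :=
  ∀ a b : Fin n, m ≤ (a : ℕ) → (a : ℕ) + 1 = (b : ℕ) → w a < w b

lemma tailmono {w : Equiv.Perm (Fin n)} (hw : NoTail (m := m) w) :
    ∀ a b : Fin n, m ≤ (a : ℕ) → a < b → w a < w b := by
  have key : ∀ d : ℕ, ∀ a b : Fin n, m ≤ (a : ℕ) → (a : ℕ) + d + 1 = (b : ℕ) → w a < w b := by
    intro d
    induction d with
    | zero => intro a b ha hab; exact hw a b ha (by omega)
    | succ e ih =>
      intro a b ha hab
      have hc : (a : ℕ) + e + 1 < n := by have := b.isLt; omega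
      have h1 := ih a ⟨(a : ℕ) + e + 1, hc⟩ ha (by simp)
      have h2 := hw ⟨(a : ℕ) + e + 1, hc⟩ b (by simp; omega) (by simp; omega)
      exact h1.trans h2
  intro a b ha hab
  have : (a : ℕ) < (b : ℕ) := hab
  exact key ((b : ℕ) - (a : ℕ) - 1) a b ha (by omega)

lemma desSet_eq {w : Equiv.Perm (Fin n)} (hc : Compat hn π w) (ht : NoTail (m := m) w) :
    DesSet w = DesSet π := by
  ext x
  simp only [DesSet, mem_image, mem_filter, mem_univ, true_and]
  constructor
  · rintro ⟨a, ⟨b, hab, hba⟩, rfl⟩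
    have ham : (a : ℕ) < m := by
      by_contra h
      push_neg at h
      exact absurd (ht a b h hab) (not_lt.mpr hba.le)
    have hbm : (b : ℕ) < m + 1 := by omega
    refine ⟨⟨(a : ℕ), by omega⟩, ⟨⟨(b : ℕ), hbm⟩, by simpa using hab, ?_⟩, by simp⟩
    have e1 : Fin.castLE hn ⟨(a : ℕ), by omega⟩ = a := Fin.ext rfl
    have e2 : Fin.castLE hn ⟨(b : ℕ), hbm⟩ = b := Fin.ext rfl
    rw [hc]
    rw [e1, e2]
    exact hba
  · rintro ⟨a, ⟨b, hab, hba⟩, rfl⟩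
    refine ⟨Fin.castLE hn a, ⟨Fin.castLE hn b, by simpa using hab, ?_⟩, by simp⟩
    exact (hc b a).mp hba

lemma headOrder {w : Equiv.Perm (Fin n)} (hc : Compat hn π w) (i : Fin (m + 1)) :
    w (Fin.castLE hn i) = (hdSet hn w).orderEmbOfFin (hdSet_card hn w) (π i) := by
  have hmono : StrictMono (fun j : Fin (m + 1) => w (Fin.castLE hn (π.symm j))) := by
    intro a b hab
    have : π (π.symm a) < π (π.symm b) := by simpa using hab
    exact (hc (π.symm a) (π.symm b)).mp this
  have hmem : ∀ j : Fin (m + 1), w (Fin.castLE hn (π.symm j)) ∈ hdSet hn w := by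
    intro j
    exact Finset.mem_image_of_mem _ (Finset.mem_univ _)
  have := Finset.orderEmbOfFin_unique (hdSet_card hn w) hmem hmono
  have h2 := congrFun this (π i)
  simpa using h2

lemma tailOrder {w : Equiv.Perm (Fin n)} (ht : NoTail (m := m) w)
    (j : Fin (n - (m + 1))) :
    w ⟨m + 1 + (j : ℕ), by have := j.isLt; omega⟩ =
      (hdSet hn w)ᶜ.orderEmbOfFin (compl_card _ (hdSet_card hn w)) j := by
  have hmono : StrictMono (fun j : Fin (n - (m + 1)) =>
      w ⟨m + 1 + (j : ℕ), by have := j.isLt; omega⟩) := by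
    intro a b hab
    exact tailmono ht _ _ (by simp only [Fin.val_mk]; omega)
      (by rw [Fin.mk_lt_mk]; exact Nat.add_lt_add_left (Fin.lt_def.mp hab) _)
  have hmem : ∀ j : Fin (n - (m + 1)),
      w ⟨m + 1 + (j : ℕ), by have := j.isLt; omega⟩ ∈ (hdSet hn w)ᶜ := by
    intro j
    rw [Finset.mem_compl, mem_hdSet_iff]
    simp
    omega
  have := Finset.orderEmbOfFin_unique (compl_card _ (hdSet_card hn w)) hmem hmono
  exact congrFun this j

/-- wbuild is compatible -/
lemma wbuild_compat (T : Finset (Fin n)) (hT : T.card = m + 1) :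
    Compat hn π (wbuild hn π T) := by
  intro i j
  rw [wbuild_apply hn π T hT, wbuild_apply hn π T hT]
  unfold buildFun
  rw [dif_pos (show ((Fin.castLE hn i : Fin n) : ℕ) < m + 1 from i.isLt),
    dif_pos (show ((Fin.castLE hn j : Fin n) : ℕ) < m + 1 from j.isLt)]
  have e1 : (⟨((Fin.castLE hn i : Fin n) : ℕ), i.isLt⟩ : Fin (m + 1)) = i := Fin.ext rfl
  have e2 : (⟨((Fin.castLE hn j : Fin n) : ℕ), j.isLt⟩ : Fin (m + 1)) = j := Fin.ext rfl
  rw [e1, e2]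
  exact ⟨fun h => (T.orderEmbOfFin hT).strictMono h, fun h => by
    have := (T.orderEmbOfFin hT).lt_iff_lt.mp h; exact this⟩

/-- wbuild has no tail descents, given the low-set condition and that the last value of π
is small -/
lemma wbuild_notail (T : Finset (Fin n)) (hT : T.card = m + 1) {k : ℕ}
    (hlow : ∀ i : Fin n, (i : ℕ) < k → i ∈ T)
    (hk : ((π (Fin.last m) : Fin (m + 1)) : ℕ) + 1 = k) :
    NoTail (m := m) (wbuild hn π T) := by
  intro a b ha hab
  rw [wbuild_apply hn π T hT, wbuild_apply hn π T hT]
  unfold buildFun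
  by_cases hb : (b : ℕ) < m + 1
  · omega
  rw [dif_neg hb]
  by_cases ha2 : (a : ℕ) < m + 1
  · -- a is position m, b is position m+1
    have haval : (a : ℕ) = m := by omega
    rw [dif_pos ha2]
    -- the head value: rank of π ⟨m⟩ = π last is κ = k - 1 < k, so the value is k - 1
    have hlast : (⟨(a : ℕ), ha2⟩ : Fin (m + 1)) = Fin.last m := Fin.ext (by simpa using haval)
    rw [hlast]
    have hval : ((T.orderEmbOfFin hT (π (Fin.last m)) : Fin n) : ℕ) = k - 1 := by
      have h0 := ordemb_low T hT hlow ((π (Fin.last m) : Fin (m + 1)) : ℕ) (π (Fin.last m)).isLt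
        (by omega)
      rw [Fin.eta] at h0
      omega
    -- the tail value is not in T hence ≥ k
    have hcm : ((Tᶜ.orderEmbOfFin (compl_card T hT)
        ⟨(b : ℕ) - (m + 1), by have := b.isLt; omega⟩ : Fin n) : ℕ) ≥ k := by
      by_contra hlt
      push_neg at hlt
      have h1 := Tᶜ.orderEmbOfFin_mem (compl_card T hT) ⟨(b : ℕ) - (m + 1), by have := b.isLt; omega⟩
      rw [Finset.mem_compl] at h1
      exact h1 (hlow _ hlt)
    rw [Fin.lt_def, hval]
    omega
  · -- both in tail
    rw [dif_neg ha2]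
    apply (Tᶜ.orderEmbOfFin (compl_card T hT)).strictMono
    simp [Fin.lt_def]
    omega

lemma hdSet_wbuild (T : Finset (Fin n)) (hT : T.card = m + 1) :
    hdSet hn (wbuild hn π T) = T := by
  ext x
  simp only [hdSet, mem_image, mem_univ, true_and]
  constructor
  · rintro ⟨i, rfl⟩
    rw [wbuild_apply hn π T hT]
    unfold buildFun
    rw [dif_pos (show ((Fin.castLE hn i : Fin n) : ℕ) < m + 1 from i.isLt)]
    exact T.orderEmbOfFin_mem hT _
  · intro hx
    have hr : x ∈ Set.range (T.orderEmbOfFin hT) := by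
      rw [T.range_orderEmbOfFin hT]; exact_mod_cast hx
    obtain ⟨j, hj⟩ := hr
    refine ⟨π.symm j, ?_⟩
    rw [wbuild_apply hn π T hT]
    unfold buildFun
    rw [dif_pos (show ((Fin.castLE hn (π.symm j) : Fin n) : ℕ) < m + 1 from (π.symm j).isLt)]
    have e : (⟨((Fin.castLE hn (π.symm j) : Fin n) : ℕ), (π.symm j).isLt⟩ : Fin (m + 1)) =
        π.symm j := Fin.ext rfl
    rw [e, Equiv.apply_symm_apply]
    exact hj

lemma wbuild_hdSet {w : Equiv.Perm (Fin n)} (hc : Compat hn π w) (ht : NoTail (m := m) w) :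
    wbuild hn π (hdSet hn w) = w := by
  apply Equiv.ext
  intro i
  rw [wbuild_apply hn π _ (hdSet_card hn w)]
  unfold buildFun
  by_cases h : (i : ℕ) < m + 1
  · rw [dif_pos h]
    have h1 := headOrder hn π hc ⟨(i : ℕ), h⟩
    have e : Fin.castLE hn (⟨(i : ℕ), h⟩ : Fin (m + 1)) = i := Fin.ext rfl
    rw [e] at h1
    exact h1.symm
  · rw [dif_neg h]
    have h2 := tailOrder hn ht ⟨(i : ℕ) - (m + 1), by have := i.isLt; omega⟩
    have e : (⟨m + 1 + ((i : ℕ) - (m + 1)), by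
        have := i.isLt; omega⟩ : Fin n) = i := Fin.ext (by simp only [Fin.val_mk]; omega)
    have h3 : w i = (hdSet hn w)ᶜ.orderEmbOfFin (compl_card _ (hdSet_card hn w))
        ⟨(i : ℕ) - (m + 1), by have := i.isLt; omega⟩ := by
      conv_lhs => rw [← e]
      exact h2
    exact h3.symm

lemma hdSet_low {w : Equiv.Perm (Fin n)} (hc : Compat hn π w) (ht : NoTail (m := m) w)
    {k : ℕ} (hk : ((π (Fin.last m) : Fin (m + 1)) : ℕ) + 1 = k) :
    ∀ x : Fin n, (x : ℕ) < k → x ∈ hdSet hn w := by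
  intro x hx
  by_contra hmem
  rw [mem_hdSet_iff] at hmem
  push_neg at hmem
  have hwp : w (w.symm x) = x := w.apply_symm_apply x
  have hmn : m < n := by omega
  have hm_lt : w ⟨m, hmn⟩ < w (w.symm x) :=
    tailmono ht _ _ (by simp) (by rw [Fin.lt_def]; simp only [Fin.val_mk]; omega)
  have h1 := headOrder hn π hc (Fin.last m)
  have e : Fin.castLE hn (Fin.last m) = (⟨m, hmn⟩ : Fin n) := Fin.ext rfl
  rw [e] at h1
  have h2 := ordemb_ge (hdSet hn w) (hdSet_card hn w)
    ((π (Fin.last m) : Fin (m + 1)) : ℕ) (π (Fin.last m)).isLt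
  rw [Fin.eta] at h2
  rw [h1] at hm_lt
  rw [hwp] at hm_lt
  have h3 := Fin.lt_def.mp hm_lt
  omega

lemma notail_of_desSet {w : Equiv.Perm (Fin n)}
    (hb : ∀ s ∈ DesSet w, s ≤ m) : NoTail (m := m) w := by
  intro a b ha hab
  by_contra h
  push_neg at h
  have hne : w b ≠ w a := fun he => by
    have := w.injective he
    rw [this] at hab
    omega
  have hlt : w b < w a := lt_of_le_of_ne h hne
  have hmem : (a : ℕ) + 1 ∈ DesSet w := by
    rw [DesSet, mem_image]
    exact ⟨a, mem_filter.mpr ⟨mem_univ _, ⟨b, hab, hlt⟩⟩, rfl⟩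
  have := hb _ hmem
  omega

lemma invNum_split {w : Equiv.Perm (Fin n)} (hc : Compat hn π w) (ht : NoTail (m := m) w) :
    invNum w = invNum π + nus univ (hdSet hn w) := by
  classical
  set T := hdSet hn w with hTdef
  rw [invNum]
  rw [← Finset.card_filter_add_card_filter_not
    (p := fun p : Fin n × Fin n => (p.2 : ℕ) < m + 1)]
  congr 1
  · -- head part = invNum π
    rw [invNum]
    rw [Finset.filter_filter]
    refine Finset.card_bij'
      (i := fun (p : Fin n × Fin n) hp =>
        ((⟨(p.1 : ℕ), by
            simp only [mem_filter, mem_univ, true_and] at hp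
            have := Fin.lt_def.mp hp.1.1; omega⟩ : Fin (m + 1)),
         (⟨(p.2 : ℕ), by
            simp only [mem_filter, mem_univ, true_and] at hp
            exact hp.2⟩ : Fin (m + 1))))
      (j := fun (q : Fin (m + 1) × Fin (m + 1)) hq => (Fin.castLE hn q.1, Fin.castLE hn q.2))
      ?_ ?_ ?_ ?_
    · intro p hp
      simp only [mem_filter, mem_univ, true_and] at hp ⊢
      obtain ⟨⟨h1, h2⟩, h3⟩ := hp
      have hp1 : (p.1 : ℕ) < m + 1 := by have := Fin.lt_def.mp h1; omega
      constructor
      · rw [Fin.lt_def]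
        simpa using Fin.lt_def.mp h1
      · rw [hc]
        have e1 : Fin.castLE hn (⟨(p.1 : ℕ), hp1⟩ : Fin (m + 1)) = p.1 := Fin.ext rfl
        have e2 : Fin.castLE hn (⟨(p.2 : ℕ), h3⟩ : Fin (m + 1)) = p.2 := Fin.ext rfl
        rw [e1, e2]
        exact h2
    · intro q hq
      simp only [mem_filter, mem_univ, true_and] at hq ⊢
      refine ⟨⟨by rw [Fin.lt_def]; simpa using Fin.lt_def.mp hq.1, ?_⟩, (q.2).isLt⟩
      exact (hc q.2 q.1).mp hq.2
    · intro p hp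
      exact Prod.ext (Fin.ext rfl) (Fin.ext rfl)
    · intro q hq
      exact Prod.ext (Fin.ext rfl) (Fin.ext rfl)
  · -- tail part = nus univ T
    have hQ : (Finset.univ.filter fun p : Fin n × Fin n => p.1 < p.2 ∧ w p.2 < w p.1).filter
        (fun p => ¬ (p.2 : ℕ) < m + 1) =
        Finset.univ.filter (fun p : Fin n × Fin n =>
          (p.1 : ℕ) < m + 1 ∧ ¬ (p.2 : ℕ) < m + 1 ∧ w p.2 < w p.1) := by
      ext p
      simp only [mem_filter, mem_univ, true_and]
      constructor
      · rintro ⟨⟨h1, h2⟩, h3⟩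
        refine ⟨?_, h3, h2⟩
        by_contra h4
        push_neg at h4
        have := tailmono ht p.1 p.2 (by omega) h1
        exact absurd this (not_lt.mpr h2.le)
      · rintro ⟨h1, h2, h3⟩
        exact ⟨⟨by rw [Fin.lt_def]; omega, h3⟩, h2⟩
    rw [hQ]
    have hstep : (Finset.univ.filter (fun p : Fin n × Fin n =>
          (p.1 : ℕ) < m + 1 ∧ ¬ (p.2 : ℕ) < m + 1 ∧ w p.2 < w p.1)).card =
        ((T ×ˢ Tᶜ).filter fun q : Fin n × Fin n => q.2 < q.1).card := by
      refine Finset.card_bij' (i := fun p _ => (w p.1, w p.2)) (j := fun q _ => (w.symm q.1, w.symm q.2)) ?_ ?_ ?_ ?_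
      · intro p hp
        simp only [mem_filter, mem_univ, true_and] at hp
        simp only [mem_filter, Finset.mem_product, Finset.mem_compl]
        refine ⟨⟨?_, ?_⟩, hp.2.2⟩
        · rw [hTdef, mem_hdSet_iff]
          simpa using hp.1
        · rw [hTdef, mem_hdSet_iff]
          simp
          omega
      · intro q hq
        simp only [mem_filter, Finset.mem_product, Finset.mem_compl] at hq
        simp only [mem_filter, mem_univ, true_and, Equiv.apply_symm_apply]
        obtain ⟨⟨hq1, hq2⟩, hq3⟩ := hq
        rw [hTdef, mem_hdSet_iff] at hq1 hq2
        exact ⟨hq1, by omega, hq3⟩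
      · intro p hp
        exact Prod.ext (w.symm_apply_apply p.1) (w.symm_apply_apply p.2)
      · intro q hq
        exact Prod.ext (w.apply_symm_apply q.1) (w.apply_symm_apply q.2)
    rw [hstep]
    rw [Finset.card_eq_sum_card_fiberwise (f := Prod.fst) (t := T) (fun q hq => by
      simp only [Finset.mem_coe, mem_filter, Finset.mem_product] at hq
      exact hq.1.1)]
    rw [nus]
    refine Finset.sum_congr rfl fun t htT => ?_
    refine Finset.card_bij' (i := fun q _ => q.2) (j := fun y _ => (t, y)) ?_ ?_ ?_ ?_
    · intro q hq
      simp only [mem_filter, Finset.mem_product, Finset.mem_compl] at hq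
      obtain ⟨⟨⟨h1, h2⟩, h3⟩, h4⟩ := hq
      simp only [mem_filter, mem_univ, true_and]
      rw [h4] at h3
      exact ⟨h3, by simpa using h2⟩
    · intro y hy
      simp only [mem_filter, mem_univ, true_and] at hy
      simp only [mem_filter, Finset.mem_product, Finset.mem_compl]
      exact ⟨⟨⟨htT, by simpa using hy.2⟩, hy.1⟩, trivial⟩
    · intro q hq
      simp only [mem_filter] at hq
      exact Prod.ext hq.2.symm rfl
    · intro y hy
      rfl

lemma nus_shift {k : ℕ} (T : Finset (Fin n))
    (hlow : ∀ i : Fin n, (i : ℕ) < k → i ∈ T) :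
    nus Finset.univ T = nus (Finset.univ.filter (fun i : Fin n => k ≤ (i : ℕ)))
      (T \ (Finset.univ.filter (fun i : Fin n => (i : ℕ) < k))) := by
  classical
  set L : Finset (Fin n) := Finset.univ.filter (fun i : Fin n => (i : ℕ) < k) with hLdef
  set s' : Finset (Fin n) := Finset.univ.filter (fun i : Fin n => k ≤ (i : ℕ)) with hs'def
  have hLT : L ⊆ T := fun x hx => hlow x (by
    rw [hLdef, Finset.mem_filter] at hx; exact hx.2)
  have hmemL : ∀ x : Fin n, x ∈ L ↔ (x : ℕ) < k := by
    intro x; rw [hLdef, Finset.mem_filter]; simp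
  have hmems' : ∀ x : Fin n, x ∈ s' ↔ k ≤ (x : ℕ) := by
    intro x; rw [hs'def, Finset.mem_filter]; simp
  rw [nus, nus]
  conv_lhs => rw [show T = (T \ L) ∪ L from (Finset.sdiff_union_of_subset hLT).symm]
  rw [Finset.sum_union Finset.sdiff_disjoint]
  have hzero : ∀ t ∈ L, ((Finset.univ.filter (· < t)).filter
      (fun y => y ∉ (T \ L) ∪ L)).card = 0 := by
    intro t ht
    rw [Finset.card_eq_zero, Finset.filter_eq_empty_iff]
    intro y hy
    rw [Finset.mem_filter] at hy
    have hyt : (y : ℕ) < (t : ℕ) := Fin.lt_def.mp hy.2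
    have htk : (t : ℕ) < k := (hmemL t).mp ht
    intro hc
    exact hc (Finset.mem_union_right _ ((hmemL y).mpr (by omega)))
  rw [Finset.sum_eq_zero hzero, add_zero]
  refine Finset.sum_congr rfl fun t htT => ?_
  congr 1
  ext y
  simp only [Finset.mem_filter, Finset.mem_univ, true_and, Finset.mem_union, Finset.mem_sdiff,
    not_or]
  constructor
  · rintro ⟨hyt, hy1, hy2⟩
    have : k ≤ (y : ℕ) := by
      by_contra hc
      push_neg at hc
      exact hy2 ((hmemL y).mpr hc)
    exact ⟨⟨(hmems' y).mpr this, hyt⟩, hy1⟩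
  · rintro ⟨⟨hys, hyt⟩, hy1⟩
    have := (hmems' y).mp hys
    exact ⟨hyt, hy1, fun hc => by have := (hmemL y).mp hc; omega⟩

end Aux

/-- for `π ∈ A(S;m+1)` with `π(m+1) = k`, the sum of `q^{ℓ(w)}` over all
`w ∈ A(S;n)` whose standardization of the first `m+1` entries is `π` equals
`q^{ℓ(π)} [n-k choose m-k+1]_q`. -/
theorem stmt9 (S : Finset ℕ) (hS : S.Nonempty) (hpos : ∀ s ∈ S, 0 < s)
    (m : ℕ) (hm : m = S.max' hS)
    (n : ℕ) (hn : m + 1 ≤ n)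
    (k : ℕ) (π : Equiv.Perm (Fin (m + 1)))
    (hπ : DesSet π = S) (hπk : (π (Fin.last m) : ℕ) + 1 = k) :
    (∑ w ∈ Finset.univ.filter (fun w : Equiv.Perm (Fin n) =>
        DesSet w = S ∧ ∀ i j : Fin (m + 1),
          (π i < π j ↔ w (Fin.castLE hn i) < w (Fin.castLE hn j))),
      (X : Polynomial ℝ) ^ invNum w) = X ^ invNum π * qBinom (n - k) (m - k + 1) := by
  classical
  have hmS : m ∈ S := by rw [hm]; exact S.max'_mem hS
  have hbound : ∀ s ∈ S, s ≤ m := by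
    intro s hs; rw [hm]; exact S.le_max' s hs
  have hkm : k ≤ m := by
    have hmDes : m ∈ DesSet π := by rw [hπ]; exact hmS
    rw [DesSet, Finset.mem_image] at hmDes
    obtain ⟨a, ha, ham⟩ := hmDes
    rw [Finset.mem_filter] at ha
    obtain ⟨-, b, hab, hba⟩ := ha
    have hblast : b = Fin.last m := Fin.ext (by simp only [Fin.val_last]; omega)
    rw [hblast] at hba
    have h1 := Fin.lt_def.mp hba
    have h2 := (π a).isLt
    omega
  have hkn : k < n := by omega
  have hcond : ∀ w : Equiv.Perm (Fin n),
      (DesSet w = S ∧ ∀ i j : Fin (m + 1),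
        (π i < π j ↔ w (Fin.castLE hn i) < w (Fin.castLE hn j)))
        ↔ (Compat hn π w ∧ NoTail (m := m) w) := by
    intro w
    constructor
    · rintro ⟨h1, h2⟩
      exact ⟨h2, notail_of_desSet (fun s hs => hbound s (h1 ▸ hs))⟩
    · rintro ⟨h1, h2⟩
      exact ⟨(desSet_eq hn π h1 h2).trans hπ, h1⟩
  have key1 : (∑ w ∈ Finset.univ.filter (fun w : Equiv.Perm (Fin n) =>
        DesSet w = S ∧ ∀ i j : Fin (m + 1),
          (π i < π j ↔ w (Fin.castLE hn i) < w (Fin.castLE hn j))),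
      (X : Polynomial ℝ) ^ invNum w)
      = ∑ T ∈ Finset.univ.filter
          (fun T : Finset (Fin n) => T.card = m + 1 ∧ ∀ i : Fin n, (i : ℕ) < k → i ∈ T),
        (X : Polynomial ℝ) ^ (invNum π + nus Finset.univ T) := by
    refine Finset.sum_nbij' (i := fun w => hdSet hn w) (j := fun T => wbuild hn π T)
      ?_ ?_ ?_ ?_ ?_
    · intro w hw
      rw [Finset.mem_filter] at hw
      obtain ⟨hc, ht⟩ := (hcond w).mp hw.2
      rw [Finset.mem_filter]
      exact ⟨Finset.mem_univ _, hdSet_card hn w, hdSet_low hn π hc ht hπk⟩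
    · intro T hT
      rw [Finset.mem_filter] at hT
      obtain ⟨-, hTc, hTlow⟩ := hT
      rw [Finset.mem_filter]
      exact ⟨Finset.mem_univ _, (hcond _).mpr
        ⟨wbuild_compat hn π T hTc, wbuild_notail hn π T hTc hTlow hπk⟩⟩
    · intro w hw
      rw [Finset.mem_filter] at hw
      obtain ⟨hc, ht⟩ := (hcond w).mp hw.2
      exact wbuild_hdSet hn π hc ht
    · intro T hT
      rw [Finset.mem_filter] at hT
      exact hdSet_wbuild hn π T hT.2.1
    · intro w hw
      rw [Finset.mem_filter] at hw
      obtain ⟨hc, ht⟩ := (hcond w).mp hw.2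
      rw [invNum_split hn π hc ht]
  rw [key1]
  have key2 : ∑ T ∈ Finset.univ.filter
        (fun T : Finset (Fin n) => T.card = m + 1 ∧ ∀ i : Fin n, (i : ℕ) < k → i ∈ T),
        (X : Polynomial ℝ) ^ (invNum π + nus Finset.univ T)
      = X ^ invNum π * ∑ T ∈ Finset.univ.filter
        (fun T : Finset (Fin n) => T.card = m + 1 ∧ ∀ i : Fin n, (i : ℕ) < k → i ∈ T),
        (X : Polynomial ℝ) ^ (nus Finset.univ T) := by
    rw [Finset.mul_sum]
    exact Finset.sum_congr rfl fun T _ => pow_add X _ _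
  rw [key2]
  congr 1
  set L : Finset (Fin n) := Finset.univ.filter (fun i : Fin n => (i : ℕ) < k) with hLdef
  set s' : Finset (Fin n) := Finset.univ.filter (fun i : Fin n => k ≤ (i : ℕ)) with hs'def
  have hmemL : ∀ x : Fin n, x ∈ L ↔ (x : ℕ) < k := by
    intro x; rw [hLdef, Finset.mem_filter]; simp
  have hmems' : ∀ x : Fin n, x ∈ s' ↔ k ≤ (x : ℕ) := by
    intro x; rw [hs'def, Finset.mem_filter]; simp
  have hLcard : L.card = k := by
    rw [hLdef, show Finset.univ.filter (fun i : Fin n => (i : ℕ) < k)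
        = Finset.Iio (⟨k, hkn⟩ : Fin n) by ext x; simp [Fin.lt_def]]
    rw [Fin.card_Iio]
  have hs'c : s' = Lᶜ := by
    rw [hs'def, hLdef]; ext x; simp [not_lt]
  have hs'card : s'.card = n - k := by
    rw [hs'c, Finset.card_compl, hLcard, Fintype.card_fin]
  have key3 : ∑ T ∈ Finset.univ.filter
        (fun T : Finset (Fin n) => T.card = m + 1 ∧ ∀ i : Fin n, (i : ℕ) < k → i ∈ T),
        (X : Polynomial ℝ) ^ (nus Finset.univ T)
      = ∑ A ∈ s'.powersetCard (m + 1 - k), (X : Polynomial ℝ) ^ (nus s' A) := by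
    refine Finset.sum_nbij' (i := fun T => T \ L) (j := fun A => A ∪ L) ?_ ?_ ?_ ?_ ?_
    · intro T hT
      rw [Finset.mem_filter] at hT
      obtain ⟨-, hTc, hTlow⟩ := hT
      have hLT : L ⊆ T := fun x hx => hTlow x ((hmemL x).mp hx)
      rw [Finset.mem_powersetCard]
      constructor
      · intro x hx
        rw [Finset.mem_sdiff] at hx
        exact (hmems' x).mpr (by
          have := hx.2
          rw [hmemL] at this
          omega)
      · rw [Finset.card_sdiff_of_subset hLT, hTc, hLcard]
    · intro A hA
      rw [Finset.mem_powersetCard] at hA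
      obtain ⟨hAs, hAc⟩ := hA
      have hdisj : Disjoint A L := by
        rw [Finset.disjoint_left]
        intro x hx hxL
        have h1 := (hmems' x).mp (hAs hx)
        have h2 := (hmemL x).mp hxL
        omega
      rw [Finset.mem_filter]
      refine ⟨Finset.mem_univ _, ?_, fun i hi => Finset.mem_union_right _ ((hmemL i).mpr hi)⟩
      rw [Finset.card_union_of_disjoint hdisj, hAc, hLcard]
      omega
    · intro T hT
      rw [Finset.mem_filter] at hT
      have hLT : L ⊆ T := fun x hx => hT.2.2 x ((hmemL x).mp hx)
      exact Finset.sdiff_union_of_subset hLT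
    · intro A hA
      rw [Finset.mem_powersetCard] at hA
      apply Finset.union_sdiff_cancel_right
      rw [Finset.disjoint_left]
      intro x hx hxL
      have h1 := (hmems' x).mp (hA.1 hx)
      have h2 := (hmemL x).mp hxL
      omega
    · intro T hT
      rw [Finset.mem_filter] at hT
      rw [nus_shift T hT.2.2]
  rw [key3]
  rw [show (∑ A ∈ s'.powersetCard (m + 1 - k), (X : Polynomial ℝ) ^ (nus s' A))
      = Gp s' (m + 1 - k) from rfl]
  rw [Gp_eq_gb (n - k) s' hs'card (m + 1 - k),
    show m - k + 1 = m + 1 - k by omega, qBinom_eq_gb (n - k) (m + 1 - k) (by omega)]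


end
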